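/- arXiv:1104.2301 — 2 statements merged into one kernel-verified Lean document; each statement's English description precedes it below -/
import Mathlib

section
/- Let (Γ, I) be a rooted directed graph with the unique simple path property, with unique directed spanning tree T, and let v be a vertex. Then the subgraph v⇓ induced on the set of vertices u with u ≤_T v (reachable from v within T) is rooted at v and has the unique simple path property from v. -/
structure DGraph : Type 1 where
  V : Type
  E : Type
  ι : E → V
  τ : E → V

namespace DGraph

/-- A directed path from `u` to `w` given by its list of edges. -/
inductive Path (G : DGraph) : G.V → G.V → List G.E → Prop
  | nil (v : G.V) : Path G v v []
  | cons (e : G.E) {w : G.V} {p : List G.E} :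
      Path G (G.τ e) w p → Path G (G.ι e) w (e :: p)

/-- The list of vertices visited by a path `p` starting at `u`. -/
def verts (G : DGraph) (u : G.V) (p : List G.E) : List G.V :=
  u :: p.map G.τ

/-- A simple directed path: a path visiting no vertex twice. -/
def SimplePath (G : DGraph) (u w : G.V) (p : List G.E) : Prop :=
  G.Path u w p ∧ (G.verts u p).Nodup

/-- `w` is reachable from `u` by a directed path. -/
def Reach (G : DGraph) (u w : G.V) : Prop := ∃ p, G.Path u w p

/-- A graph is rooted at `v` if every vertex is reachable from `v`. -/
def Rooted (G : DGraph) (v : G.V) : Prop := ∀ w, G.Reach v w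

end DGraph


namespace DGraph

/-- A directed path from `u` to `w` all of whose edges lie in `ES`. -/
def PathIn (G : DGraph) (ES : Set G.E) (u w : G.V) (p : List G.E) : Prop :=
  G.Path u w p ∧ ∀ e ∈ p, e ∈ ES

/-- A directed rooted subtree of `G` rooted at `v`, given by a vertex set `VS`
and an edge set `ES`: it is a subgraph containing `v` in which every vertex is
reached from `v` by a unique directed path. -/
def IsRootedSubtree (G : DGraph) (v : G.V) (VS : Set G.V) (ES : Set G.E) : Prop :=
  v ∈ VS ∧ (∀ e ∈ ES, G.ι e ∈ VS ∧ G.τ e ∈ VS) ∧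
    ∀ w ∈ VS, ∃! p : List G.E, G.PathIn ES v w p

/-- A directed spanning tree of `G` rooted at `v`. -/
def IsSpanningTree (G : DGraph) (v : G.V) (ES : Set G.E) : Prop :=
  G.IsRootedSubtree v Set.univ ES


theorem Path.append' {G : DGraph} {u w x : G.V} {p q : List G.E}
    (hp : G.Path u w p) (hq : G.Path w x q) : G.Path u x (p ++ q) := by
  induction hp with
  | nil => simpa using hq
  | cons e _ ih => exact Path.cons e (ih hq)

theorem Path.eq_of_nil {G : DGraph} {u w : G.V} (h : G.Path u w []) : u = w := by
  cases h; rfl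

theorem Path.split_vert {G : DGraph} {u w x : G.V} {p : List G.E}
    (hp : G.Path u w p) (hx : x ∈ G.verts u p) :
    ∃ a b, p = a ++ b ∧ G.Path u x a ∧ G.Path x w b := by
  induction hp with
  | nil v =>
    simp [verts] at hx
    exact ⟨[], [], rfl, hx ▸ Path.nil v, hx ▸ Path.nil v⟩
  | cons e hp ih =>
    rcases List.mem_cons.mp hx with rfl | hx'
    · exact ⟨[], _, rfl, Path.nil _, Path.cons e hp⟩
    · obtain ⟨a, b, rfl, h1, h2⟩ := ih hx'
      exact ⟨e :: a, b, rfl, Path.cons e h1, h2⟩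

theorem Path.split_edge {G : DGraph} {u w : G.V} {e : G.E} {p : List G.E}
    (hp : G.Path u w p) (he : e ∈ p) :
    ∃ a b, p = a ++ e :: b ∧ G.Path u (G.ι e) a ∧ G.Path (G.τ e) w b := by
  induction hp with
  | nil => simp at he
  | cons f hf ih =>
    rcases List.mem_cons.mp he with rfl | he'
    · exact ⟨[], _, rfl, Path.nil _, hf⟩
    · obtain ⟨a, b, rfl, h1, h2⟩ := ih he'
      exact ⟨f :: a, b, rfl, Path.cons f h1, h2⟩

/-- Any path contains a simple path with the same endpoints and edges among its edges. -/
theorem shorten_aux {G : DGraph} (n : ℕ) : ∀ {u w : G.V} {p : List G.E}, p.length ≤ n →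
    G.Path u w p → ∃ q, G.SimplePath u w q ∧ ∀ e ∈ q, e ∈ p := by
  induction n with
  | zero =>
    intro u w p hn hp
    have hp0 : p = [] := List.length_eq_zero_iff.mp (Nat.le_zero.mp hn)
    subst hp0
    have := hp.eq_of_nil
    subst this
    exact ⟨[], ⟨Path.nil u, by simp [verts]⟩, by simp⟩
  | succ n ih =>
    intro u w p hn hp
    by_cases hu : u ∈ p.map G.τ
    · obtain ⟨e, he, hτ⟩ := List.mem_map.mp hu
      obtain ⟨a, b, rfl, _, h2⟩ := hp.split_edge he
      rw [hτ] at h2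
      have hb : b.length ≤ n := by
        have := List.length_append (as := a) (bs := e :: b) ▸ hn
        simp at this ⊢; omega
      obtain ⟨q, hq, hsub⟩ := ih hb h2
      exact ⟨q, hq, fun e' he' => by simp [hsub e' he']⟩
    · cases hp with
      | nil => exact ⟨[], ⟨Path.nil _, by simp [verts]⟩, by simp⟩
      | @cons e w p' hp' =>
        have hp'n : p'.length ≤ n := by simp at hn; omega
        obtain ⟨q, ⟨hq, hnd⟩, hsub⟩ := ih hp'n hp'
        refine ⟨e :: q, ⟨Path.cons e hq, ?_⟩, fun e' he' => ?_⟩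
        · have hnotin : G.ι e ∉ G.verts (G.τ e) q := by
            intro hmem
            apply hu
            rcases List.mem_cons.mp hmem with h | h
            · exact h ▸ List.mem_map_of_mem (f := G.τ) (List.mem_cons_self (a := e) (l := p'))
            · obtain ⟨e', he', hτ'⟩ := List.mem_map.mp h
              exact hτ' ▸ List.mem_map_of_mem (f := G.τ) (List.mem_cons_of_mem e (hsub e' he'))
          simpa [verts] using And.intro hnotin hnd
        · rcases List.mem_cons.mp he' with h | h
          · exact h ▸ List.mem_cons_self (a := e) (l := p')
          · exact List.mem_cons_of_mem e (hsub e' h)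

theorem shorten {G : DGraph} {u w : G.V} {p : List G.E} (hp : G.Path u w p) :
    ∃ q, G.SimplePath u w q ∧ ∀ e ∈ q, e ∈ p :=
  shorten_aux p.length le_rfl hp

theorem pathIn_unique {G : DGraph} {I : G.V} {ES : Set G.E}
    (hT : G.IsSpanningTree I ES) {v u : G.V} {q₁ q₂ : List G.E}
    (h1 : G.PathIn ES v u q₁) (h2 : G.PathIn ES v u q₂) : q₁ = q₂ := by
  obtain ⟨pv, hpv, _⟩ := hT.2.2 v (Set.mem_univ v)
  obtain ⟨_, _, hun⟩ := hT.2.2 u (Set.mem_univ u)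
  have k1 : G.PathIn ES I u (pv ++ q₁) :=
    ⟨hpv.1.append' h1.1, fun e he => (List.mem_append.mp he).elim (hpv.2 e) (h1.2 e)⟩
  have k2 : G.PathIn ES I u (pv ++ q₂) :=
    ⟨hpv.1.append' h2.1, fun e he => (List.mem_append.mp he).elim (hpv.2 e) (h2.2 e)⟩
  exact List.append_cancel_left ((hun _ k1).trans (hun _ k2).symm)

/-- Let `(Γ, I)` have the unique simple path property with unique directed
spanning tree `T` (edge set `ES`), and let `v` be a vertex.  Then the induced
subgraph `v⇓` on the vertices reachable from `v` within `T` is rooted at `v`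
and has the unique simple path property from `v`: each of its vertices is
reached from `v` by a unique simple path lying in `v⇓`. -/
theorem down_tree_uspp (G : DGraph) (I : G.V) (hroot : G.Rooted I)
    (huspp : ∀ w : G.V, ∃! p : List G.E, G.SimplePath I w p)
    (ES : Set G.E) (hT : G.IsSpanningTree I ES) (v : G.V) :
    ∀ u ∈ {u : G.V | ∃ p : List G.E, G.PathIn ES v u p},
      ∃! p : List G.E, G.SimplePath v u p ∧
        ∀ e ∈ p, G.ι e ∈ {u : G.V | ∃ p : List G.E, G.PathIn ES v u p} ∧
          G.τ e ∈ {u : G.V | ∃ p : List G.E, G.PathIn ES v u p} := by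
  intro u hu
  obtain ⟨p, hp⟩ := hu
  set D : Set G.V := {u : G.V | ∃ p : List G.E, G.PathIn ES v u p} with hD
  -- the tree path from I to v, and its simplicity
  obtain ⟨pv, hpv, _⟩ := hT.2.2 v (Set.mem_univ v)
  have hpv_simple : G.SimplePath I v pv := by
    obtain ⟨q₀, hq₀, hsub₀⟩ := shorten hpv.1
    have : G.PathIn ES I v q₀ := ⟨hq₀.1, fun e he => hpv.2 e (hsub₀ e he)⟩
    have := pathIn_unique hT this hpv
    exact this ▸ hq₀
  -- key: vertices of D on the tree path I→v must equal v
  have hkey : ∀ x ∈ D, x ∈ G.verts I pv → x = v := by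
    intro x hx hxv
    obtain ⟨r, hr⟩ := hx
    obtain ⟨a, b, hab, ha, hb⟩ := hpv.1.split_vert hxv
    have haIn : G.PathIn ES I x a :=
      ⟨ha, fun e he => hpv.2 e (by rw [hab]; exact List.mem_append_left b he)⟩
    have hpvr : G.PathIn ES I x (pv ++ r) :=
      ⟨hpv.1.append' hr.1, fun e he => (List.mem_append.mp he).elim (hpv.2 e) (hr.2 e)⟩
    have heq : a = pv ++ r := pathIn_unique hT haIn hpvr
    have hlen : a.length = pv.length + r.length := by rw [heq]; simp
    have hlen2 : pv.length = a.length + b.length := by rw [hab]; simp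
    have hb0 : b = [] := List.length_eq_zero_iff.mp (by omega)
    exact (hb0 ▸ hb).eq_of_nil
  -- any admissible simple path from v to u, prefixed by pv, is a simple path from I to u
  have hlift : ∀ q : List G.E, (G.SimplePath v u q ∧
      ∀ e ∈ q, G.ι e ∈ D ∧ G.τ e ∈ D) → G.SimplePath I u (pv ++ q) := by
    rintro q ⟨⟨hq, hqnd⟩, hqD⟩
    refine ⟨hpv_simple.1.append' hq, ?_⟩
    have : G.verts I (pv ++ q) = G.verts I pv ++ q.map G.τ := by simp [verts]
    rw [this, List.nodup_append]
    refine ⟨hpv_simple.2, (List.nodup_cons.mp hqnd).2, ?_⟩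
    intro x hx1 x' hx2 hxx
    subst hxx
    obtain ⟨e, he, hτ⟩ := List.mem_map.mp hx2
    have hxD : x ∈ D := hτ ▸ (hqD e he).2
    have hxv : x = v := hkey x hxD hx1
    exact (List.nodup_cons.mp hqnd).1 (hxv ▸ hx2)
  -- uniqueness of admissible simple paths
  have huniq : ∀ q₁ q₂ : List G.E,
      (G.SimplePath v u q₁ ∧ ∀ e ∈ q₁, G.ι e ∈ D ∧ G.τ e ∈ D) →
      (G.SimplePath v u q₂ ∧ ∀ e ∈ q₂, G.ι e ∈ D ∧ G.τ e ∈ D) → q₁ = q₂ := by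
    intro q₁ q₂ h1 h2
    obtain ⟨_, _, hun⟩ := huspp u
    exact List.append_cancel_left ((hun _ (hlift q₁ h1)).trans (hun _ (hlift q₂ h2)).symm)
  -- existence: shorten the tree path from v to u
  obtain ⟨q, hq, hsub⟩ := shorten hp.1
  have hqES : ∀ e ∈ q, e ∈ ES := fun e he => hp.2 e (hsub e he)
  have hqprop : G.SimplePath v u q ∧ ∀ e ∈ q, G.ι e ∈ D ∧ G.τ e ∈ D := by
    refine ⟨hq, fun e he => ?_⟩
    obtain ⟨a, b, hab, ha, _⟩ := hq.1.split_edge he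
    have haES : ∀ e' ∈ a, e' ∈ ES := fun e' he' =>
      hqES e' (by rw [hab]; exact List.mem_append_left _ he')
    refine ⟨⟨a, ha, haES⟩, ⟨a ++ [e], ha.append' (Path.cons e (Path.nil _)), ?_⟩⟩
    intro e' he'
    rcases List.mem_append.mp he' with h | h
    · exact haES e' h
    · simp at h; exact h ▸ hqES e he
  exact ⟨q, hqprop, fun q' hq' => huniq q' q hq' hqprop⟩

end DGraph
end

section
/- Let (Γ, v) have the unique simple path property with spanning tree T, and let C be a strongly connected component of Γ containing at least one edge. Then C equals the union of the loops lp(e) = [τ(e), ι(e)]·e over all bold arrows e (edges of Γ not in T) contained in C, where [τ(e), ι(e)] denotes the geodesic in T. -/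
namespace DGraph

variable {G : DGraph} {v : G.V} {ES : Set G.E}

lemma path_append {x y z : G.V} {p q : List G.E} (h1 : G.Path x y p) (h2 : G.Path y z q) :
    G.Path x z (p ++ q) := by
  induction h1 with
  | nil => simpa
  | cons e _ ih => exact Path.cons e (ih h2)

lemma path_nil_eq {x y : G.V} (h : G.Path x y []) : x = y := by
  cases h; rfl

lemma path_split {x z : G.V} {p q : List G.E} (h : G.Path x z (p ++ q)) :
    ∃ m, G.Path x m p ∧ G.Path m z q := by
  induction p generalizing x with
  | nil => exact ⟨x, Path.nil x, h⟩
  | cons e p ih =>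
    rw [List.cons_append] at h
    cases h with
    | cons _ h' =>
      obtain ⟨m, h1, h2⟩ := ih h'
      exact ⟨m, Path.cons e h1, h2⟩

lemma path_last {x m : G.V} {p : List G.E} {e : G.E} (h : G.Path x m (p ++ [e])) :
    m = G.τ e := by
  induction p generalizing x with
  | nil =>
    rw [List.nil_append] at h
    cases h with
    | cons _ h' => exact (path_nil_eq h').symm
  | cons f p ih =>
    rw [List.cons_append] at h
    cases h with
    | cons _ h' => exact ih h'

lemma path_end_mem {x y : G.V} {p : List G.E} (h : G.Path x y p) : y ∈ G.verts x p := by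
  induction h with
  | nil v => simp [verts]
  | cons e h ih => simp only [verts, List.map_cons, List.mem_cons] at ih ⊢; tauto

lemma reach_trans {x y z : G.V} (h1 : G.Reach x y) (h2 : G.Reach y z) : G.Reach x z := by
  obtain ⟨p, hp⟩ := h1; obtain ⟨q, hq⟩ := h2; exact ⟨p ++ q, path_append hp hq⟩

lemma reach_edge (e : G.E) : G.Reach (G.ι e) (G.τ e) := ⟨[e], Path.cons e (Path.nil _)⟩

lemma path_mem_reach {x y : G.V} {p : List G.E} (h : G.Path x y p) {e : G.E} (he : e ∈ p) :
    G.Reach x (G.ι e) ∧ G.Reach (G.τ e) y := by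
  obtain ⟨l1, l2, rfl⟩ := List.append_of_mem he
  obtain ⟨m, h1, h2⟩ := path_split h
  cases h2 with
  | cons _ h3 => exact ⟨⟨l1, h1⟩, ⟨l2, h3⟩⟩

end DGraph

namespace DGraph
variable {G : DGraph} {v : G.V} {ES : Set G.E}

noncomputable def tp (hT : G.IsSpanningTree v ES) (w : G.V) : List G.E :=
  (hT.2.2 w trivial).choose

lemma tp_spec (hT : G.IsSpanningTree v ES) (w : G.V) : G.PathIn ES v w (tp hT w) :=
  (hT.2.2 w trivial).choose_spec.1

lemma tp_uniq (hT : G.IsSpanningTree v ES) {w : G.V} {p : List G.E}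
    (h : G.PathIn ES v w p) : p = tp hT w :=
  (hT.2.2 w trivial).choose_spec.2 p h

lemma tp_nil (hT : G.IsSpanningTree v ES) : tp hT v = [] :=
  (tp_uniq hT ⟨Path.nil v, by simp⟩).symm

/-- Fact 2: for a tree edge, the tree path to its target extends the tree path
to its source. -/
lemma tp_tree_edge (hT : G.IsSpanningTree v ES) {e : G.E} (he : e ∈ ES) :
    tp hT (G.τ e) = tp hT (G.ι e) ++ [e] := by
  refine (tp_uniq hT ⟨path_append (tp_spec hT (G.ι e)).1 (Path.cons e (Path.nil _)), ?_⟩).symm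
  intro f hf
  rcases List.mem_append.1 hf with h | h
  · exact (tp_spec hT (G.ι e)).2 f h
  · simp at h; subst h; exact he

lemma not_nodup_split {α β : Type*} (f : α → β) : ∀ (l : List α), ¬(l.map f).Nodup →
    ∃ g g' l1 l2 l3, l = l1 ++ g :: l2 ++ g' :: l3 ∧ f g = f g'
  | [], h => by simp at h
  | b :: t, h => by
    rw [List.map_cons, List.nodup_cons, not_and_or] at h
    rcases h with h | h
    · push_neg at h
      rw [List.mem_map] at h
      obtain ⟨g', hg', hfg⟩ := h
      obtain ⟨l2, l3, rfl⟩ := List.append_of_mem hg'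
      exact ⟨b, g', [], l2, l3, rfl, hfg.symm⟩
    · obtain ⟨g, g', l1, l2, l3, rfl, hfg⟩ := not_nodup_split f t h
      exact ⟨g, g', b :: l1, l2, l3, rfl, hfg⟩

lemma tp_nodup (hT : G.IsSpanningTree v ES) (w : G.V) : (G.verts v (tp hT w)).Nodup := by
  by_contra h
  rw [verts, List.nodup_cons, not_and_or] at h
  have hq := tp_spec hT w
  rcases h with h | h
  · push_neg at h
    rw [List.mem_map] at h
    obtain ⟨g, hg, hgv⟩ := h
    obtain ⟨l1, l2, hsplit⟩ := List.append_of_mem hg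
    have hpath := hq.1
    rw [hsplit, show l1 ++ g :: l2 = (l1 ++ [g]) ++ l2 by simp] at hpath
    obtain ⟨m, h1, h2⟩ := path_split hpath
    have hm : m = G.τ g := path_last h1
    rw [hm, hgv] at h1
    have : l1 ++ [g] = tp hT v :=
      tp_uniq hT ⟨h1, fun x hx => hq.2 x (by rw [hsplit]; simp at hx ⊢; tauto)⟩
    rw [tp_nil hT] at this
    simp at this
  · obtain ⟨g, g', l1, l2, l3, hsplit, hgg⟩ := not_nodup_split G.τ _ h
    have hpath := hq.1
    rw [hsplit, show l1 ++ g :: l2 ++ g' :: l3 = ((l1 ++ [g]) ++ (l2 ++ [g'])) ++ l3 by simp] at hpath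
    obtain ⟨m2, h12, h3⟩ := path_split hpath
    obtain ⟨m1, h1, h2⟩ := path_split h12
    have hm1 : m1 = G.τ g := path_last h1
    have hm2 : m2 = G.τ g' := path_last (by rw [show (l1 ++ [g]) ++ (l2 ++ [g']) = (l1 ++ g :: l2) ++ [g'] by simp] at h12; exact h12)
    have e1 : l1 ++ [g] = tp hT (G.τ g) := by
      refine tp_uniq hT ⟨hm1 ▸ h1, fun x hx => hq.2 x ?_⟩
      rw [hsplit]; simp at hx ⊢; tauto
    have e2 : (l1 ++ [g]) ++ (l2 ++ [g']) = tp hT (G.τ g) := by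
      rw [hgg]
      refine tp_uniq hT ⟨hm2 ▸ h12, fun x hx => hq.2 x ?_⟩
      rw [hsplit]; simp at hx ⊢; tauto
    rw [← e1] at e2
    simp at e2

end DGraph

namespace DGraph
variable {G : DGraph} {v : G.V} {ES : Set G.E}

lemma verts_append {x : G.V} (p q : List G.E) :
    G.verts x (p ++ q) = G.verts x p ++ q.map G.τ := by
  simp [verts]

/-- Fact 1: a bold edge's target is a tree ancestor of its source, and the
geodesic from the target to the source exists in the tree. -/
lemma bold_geodesic (hT : G.IsSpanningTree v ES)
    (huspp : ∀ w : G.V, ∃! p : List G.E, G.SimplePath v w p)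
    {e : G.E} (he : e ∉ ES) :
    ∃ p, G.PathIn ES (G.τ e) (G.ι e) p ∧ tp hT (G.ι e) = tp hT (G.τ e) ++ p := by
  have hq := tp_spec hT (G.ι e)
  by_cases hτ : G.τ e ∈ G.verts v (tp hT (G.ι e))
  · rw [verts, List.mem_cons, List.mem_map] at hτ
    rcases hτ with hτ | ⟨g, hg, hgτ⟩
    · subst hτ
      refine ⟨tp hT (G.ι e), ⟨hq.1, hq.2⟩, ?_⟩
      rw [tp_nil hT]; simp
    · obtain ⟨l1, l2, hsplit⟩ := List.append_of_mem hg
      have hpath := hq.1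
      rw [hsplit, show l1 ++ g :: l2 = (l1 ++ [g]) ++ l2 by simp] at hpath
      obtain ⟨m, h1, h2⟩ := path_split hpath
      have hm : m = G.τ g := path_last h1
      subst hm
      have e1 : l1 ++ [g] = tp hT (G.τ g) := by
        refine tp_uniq hT ⟨h1, fun x hx => hq.2 x ?_⟩
        rw [hsplit]; simp at hx ⊢; tauto
      refine ⟨l2, ⟨hgτ ▸ h2, fun x hx => hq.2 x ?_⟩, ?_⟩
      · rw [hsplit]; simp [hx]
      · rw [hsplit, ← hgτ, ← e1]; simp
  · exfalso
    -- then tp (ι e) ++ [e] is a simple path from v to τ e, hence equals tp (τ e) ⊆ ES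
    have hpath : G.Path v (G.τ e) (tp hT (G.ι e) ++ [e]) :=
      path_append hq.1 (Path.cons e (Path.nil _))
    have hsimple : G.SimplePath v (G.τ e) (tp hT (G.ι e) ++ [e]) := by
      refine ⟨hpath, ?_⟩
      rw [verts_append]
      simp only [List.map_cons, List.map_nil]
      rw [List.nodup_append']
      refine ⟨tp_nodup hT (G.ι e), List.nodup_singleton _, ?_⟩
      simp only [List.disjoint_singleton]
      exact fun h => hτ (by simpa using h)
    have hsimple' : G.SimplePath v (G.τ e) (tp hT (G.τ e)) :=
      ⟨(tp_spec hT (G.τ e)).1, tp_nodup hT (G.τ e)⟩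
    have heq := ((huspp (G.τ e)).unique hsimple hsimple')
    have : e ∈ tp hT (G.τ e) := heq ▸ (by simp)
    exact he ((tp_spec hT (G.τ e)).2 e this)

/-- Key walk lemma for vertices. -/
lemma loop_of_walk_vertex (hT : G.IsSpanningTree v ES)
    (huspp : ∀ w : G.V, ∃! p : List G.E, G.SimplePath v w p) {u : G.V} :
    ∀ {W : List G.E} {x : G.V}, G.Path x u W → u ∈ G.verts v (tp hT x) →
      W = [] ∨ ∃ e ∈ W, e ∉ ES ∧ ∃ p, G.PathIn ES (G.τ e) (G.ι e) p ∧
        u ∈ G.verts (G.τ e) p := by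
  intro W
  induction W with
  | nil => intro x _ _; exact Or.inl rfl
  | cons e W' ih =>
    intro x hpath hu
    cases hpath with
    | cons _ hW' =>
      right
      by_cases hES : e ∈ ES
      · have htp := tp_tree_edge hT hES
        have hu' : u ∈ G.verts v (tp hT (G.τ e)) := by
          rw [htp, verts_append]; exact List.mem_append_left _ hu
        rcases ih hW' hu' with hnil | ⟨e', he', h⟩
        · -- W' = [], so τ e = u; contradiction with nodup
          subst hnil
          have : G.τ e = u := path_nil_eq hW'
          exfalso
          have hnd := tp_nodup hT (G.τ e)
          rw [htp, verts_append] at hnd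
          simp only [List.map_cons, List.map_nil] at hnd
          rw [List.nodup_append'] at hnd
          have hn := hnd.2.2
          simp only [List.disjoint_singleton] at hn
          exact hn (by rw [this]; exact hu)
        · exact ⟨e', List.mem_cons_of_mem e he', h⟩
      · obtain ⟨p, hp, htp⟩ := bold_geodesic hT huspp hES
        rw [htp, verts_append, List.mem_append] at hu
        rcases hu with hu | hu
        · rcases ih hW' hu with hnil | ⟨e', he', h⟩
          · subst hnil
            have hτu : G.τ e = u := path_nil_eq hW'
            exact ⟨e, by simp, hES, p, hp, by rw [← hτu]; simp [verts]⟩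
          · exact ⟨e', List.mem_cons_of_mem e he', h⟩
        · exact ⟨e, List.mem_cons_self, hES, p, hp, by simp [verts, hu]⟩

/-- Key walk lemma for tree edges. -/
lemma loop_of_walk_edge (hT : G.IsSpanningTree v ES)
    (huspp : ∀ w : G.V, ∃! p : List G.E, G.SimplePath v w p) {f : G.E} :
    ∀ {W : List G.E} {x y : G.V}, G.Path x y W → f ∈ tp hT x → f ∉ tp hT y →
      ∃ e ∈ W, e ∉ ES ∧ ∃ p, G.PathIn ES (G.τ e) (G.ι e) p ∧ f ∈ p := by
  intro W
  induction W with
  | nil => intro x y hpath h1 h2; exact absurd ((path_nil_eq hpath) ▸ h1) h2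
  | cons e W' ih =>
    intro x y hpath h1 h2
    cases hpath with
    | cons _ hW' =>
      by_cases hES : e ∈ ES
      · have h1' : f ∈ tp hT (G.τ e) := by
          rw [tp_tree_edge hT hES]; exact List.mem_append_left _ h1
        obtain ⟨e', he', h⟩ := ih hW' h1' h2
        exact ⟨e', List.mem_cons_of_mem e he', h⟩
      · obtain ⟨p, hp, htp⟩ := bold_geodesic hT huspp hES
        rw [htp, List.mem_append] at h1
        rcases h1 with h1 | h1
        · obtain ⟨e', he', h⟩ := ih hW' h1 h2
          exact ⟨e', List.mem_cons_of_mem e he', h⟩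
        · exact ⟨e, List.mem_cons_self, hES, p, hp, h1⟩


/-- Let `(Γ, v)` have the unique simple path property with spanning tree `T`
(edge set `ES`), and let `C` be a strongly connected component containing at
least one edge.  Then `C` is the union of the loops `lp(e) = [τ(e), ι(e)]·e`
over the bold arrows `e` (edges outside `T`) contained in `C`: every vertex of
`C` lies on such a loop, and every edge of `C` belongs to such a loop. -/
theorem strong_component_eq_union_loops (G : DGraph) (v : G.V)
    (hroot : G.Rooted v)
    (huspp : ∀ w : G.V, ∃! p : List G.E, G.SimplePath v w p)
    (ES : Set G.E) (hT : G.IsSpanningTree v ES)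
    (c : G.V) (C : Set G.V) (hC : C = {u : G.V | G.Reach u c ∧ G.Reach c u})
    (hedge : ∃ e : G.E, G.ι e ∈ C ∧ G.τ e ∈ C) :
    (∀ u ∈ C, ∃ e : G.E, e ∉ ES ∧ G.ι e ∈ C ∧ G.τ e ∈ C ∧
        ∃ p : List G.E, G.PathIn ES (G.τ e) (G.ι e) p ∧
          u ∈ G.verts (G.τ e) p) ∧
      (∀ f : G.E, G.ι f ∈ C → G.τ f ∈ C →
        ∃ e : G.E, e ∉ ES ∧ G.ι e ∈ C ∧ G.τ e ∈ C ∧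
          ∃ p : List G.E, G.PathIn ES (G.τ e) (G.ι e) p ∧
            (f = e ∨ f ∈ p)) := by
  subst hC
  obtain ⟨e0, he0ι, he0τ⟩ := hedge
  simp only [Set.mem_setOf_eq] at he0ι he0τ
  constructor
  · intro u hu
    simp only [Set.mem_setOf_eq] at hu
    obtain ⟨q1, hq1⟩ : G.Reach u (G.ι e0) := reach_trans hu.1 he0ι.2
    obtain ⟨q2, hq2⟩ : G.Reach (G.τ e0) u := reach_trans he0τ.1 hu.2
    have hW : G.Path u u (q1 ++ e0 :: q2) := path_append hq1 (Path.cons e0 hq2)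
    have hu_tp : u ∈ G.verts v (tp hT u) := path_end_mem (tp_spec hT u).1
    rcases loop_of_walk_vertex hT huspp hW hu_tp with hnil | ⟨e, heW, heES, p, hp, hup⟩
    · simp at hnil
    · obtain ⟨hr1, hr2⟩ := path_mem_reach hW heW
      refine ⟨e, heES, ?_, ?_, p, hp, hup⟩
      · exact ⟨reach_trans (reach_edge e) (reach_trans hr2 hu.1), reach_trans hu.2 hr1⟩
      · exact ⟨reach_trans hr2 hu.1, reach_trans (reach_trans hu.2 hr1) (reach_edge e)⟩
  · intro f hfι hfτ
    simp only [Set.mem_setOf_eq] at hfι hfτ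
    by_cases hfES : f ∈ ES
    · obtain ⟨W, hW⟩ : G.Reach (G.τ f) (G.ι f) := reach_trans hfτ.1 hfι.2
      have h1 : f ∈ tp hT (G.τ f) := by rw [tp_tree_edge hT hfES]; simp
      have h2 : f ∉ tp hT (G.ι f) := by
        intro hmem
        have hnd := tp_nodup hT (G.τ f)
        rw [tp_tree_edge hT hfES, verts_append] at hnd
        simp only [List.map_cons, List.map_nil] at hnd
        rw [List.nodup_append'] at hnd
        have hn := hnd.2.2
        simp only [List.disjoint_singleton] at hn
        exact hn (by simp only [verts, List.mem_cons, List.mem_map]; exact Or.inr ⟨f, hmem, rfl⟩)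
      obtain ⟨e, heW, heES, p, hp, hfp⟩ := loop_of_walk_edge hT huspp hW h1 h2
      obtain ⟨hr1, hr2⟩ := path_mem_reach hW heW
      refine ⟨e, heES, ?_, ?_, p, hp, Or.inr hfp⟩
      · exact ⟨reach_trans (reach_edge e) (reach_trans hr2 hfι.1), reach_trans hfτ.2 hr1⟩
      · exact ⟨reach_trans hr2 hfι.1, reach_trans (reach_trans hfτ.2 hr1) (reach_edge e)⟩
    · obtain ⟨p, hp, _⟩ := bold_geodesic hT huspp hfES
      exact ⟨f, hfES, hfι, hfτ, p, hp, Or.inl rfl⟩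


end DGraph
end
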